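/- arXiv:2509.23485 — 3 statements merged into one kernel-verified Lean document; each statement's English description precedes it below -/
import Mathlib

section
/- Let p be a prime number and let A and B be commutative rings of characteristic p. Suppose B is an étale A-algebra. If A is a perfect ring (i.e., the Frobenius endomorphism x ↦ xᵖ of A is bijective), then B is a perfect ring. -/
/-!
STATEMENT 2: If `B` is an étale `A`-algebra, `A` and `B` are commutative rings of
characteristic `p`, and `A` is perfect, then `B` is perfect.
-/
set_option synthInstance.maxHeartbeats 400000

set_option maxHeartbeats 1000000 in
universe u

open Algebra TensorProduct

set_option maxHeartbeats 1000000 in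
theorem frob_surj_aux (p : ℕ) [Fact p.Prime] (A B : Type u) [CommRing A] [CommRing B]
    [CharP A p] [CharP B p] [Algebra A B] [Algebra.Etale A B] [PerfectRing A p] : Function.Surjective (frobenius B p) := by
  classical
  have hp : 0 < p := (Fact.out : p.Prime).pos
  set C : Subalgebra A B := Algebra.adjoin A (Set.range fun b : B => b ^ p) with hCdef
  -- generators of B over A
  obtain ⟨s, hs⟩ := (inferInstance : Algebra.FiniteType A B).out
  -- B is generated by s over C
  have hsC : Algebra.adjoin C (s : Set B) = ⊤ := by
    rw [_root_.eq_top_iff]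
    intro b _
    have hb : b ∈ Algebra.adjoin A (s : Set B) := hs ▸ trivial
    have : Algebra.adjoin A (s : Set B) ≤ (Algebra.adjoin C (s : Set B)).restrictScalars A :=
      Algebra.adjoin_le fun x hx => Algebra.subset_adjoin hx
    exact this hb
  have hpow : ∀ x : B, x ^ p ∈ C := fun x => hCdef ▸ Algebra.subset_adjoin ⟨x, rfl⟩
  -- B is a finite C-module
  have hfin : Module.Finite C B := by
    have h1 := fg_adjoin_of_finite s.finite_toSet (fun x _ =>
      ⟨Polynomial.X ^ p - Polynomial.C (⟨x ^ p, hpow x⟩ : C),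
        Polynomial.monic_X_pow_sub_C _ hp.ne', by
        simp only [Polynomial.eval₂_sub, Polynomial.eval₂_X_pow, Polynomial.eval₂_C]
        exact sub_eq_zero_of_eq rfl⟩)
    rw [hsC] at h1
    exact ⟨by rwa [Algebra.top_toSubmodule] at h1⟩
  -- characteristic p on the tensor square
  haveI hcharT : CharP (B ⊗[C] B) p := by
    constructor
    intro n
    constructor
    · intro h
      have := congrArg (TensorProduct.lmul' (S := B) C) h
      rw [map_natCast, map_zero] at this
      exact (CharP.cast_eq_zero_iff B p n).mp this
    · rintro ⟨k, rfl⟩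
      have h1 : ((p : ℕ) : B ⊗[C] B) = algebraMap B (B ⊗[C] B) ((p : ℕ) : B) := (map_natCast (algebraMap B (B ⊗[C] B)) _).symm
      rw [Nat.cast_mul, h1, CharP.cast_eq_zero B p, map_zero, zero_mul]
  haveI : ExpChar (B ⊗[C] B) p := ExpChar.prime Fact.out
  -- every element of the kernel of multiplication has vanishing p-th power
  have hfrob : ∀ ξ : B ⊗[C] B, ξ ^ p = ((TensorProduct.lmul' (S := B) C ξ) ^ p) ⊗ₜ[C] (1 : B) := by
    intro ξ
    induction ξ using TensorProduct.induction_on with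
    | zero => rw [map_zero, zero_pow hp.ne', zero_pow hp.ne', TensorProduct.zero_tmul]
    | tmul x y =>
        have hy : (1 : B) ⊗ₜ[C] (y ^ p) = (y ^ p) ⊗ₜ[C] (1 : B) := by
          have h2 : y ^ p = algebraMap C B ⟨y ^ p, hpow y⟩ := rfl
          rw [h2, Algebra.algebraMap_eq_smul_one, ← TensorProduct.smul_tmul]
        rw [TensorProduct.lmul'_apply_tmul, Algebra.TensorProduct.tmul_pow, mul_pow]
        calc (x ^ p) ⊗ₜ[C] (y ^ p)
            = ((x ^ p) ⊗ₜ[C] (1 : B)) * ((1 : B) ⊗ₜ[C] (y ^ p)) := by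
              rw [Algebra.TensorProduct.tmul_mul_tmul, mul_one, one_mul]
          _ = ((x ^ p) ⊗ₜ[C] (1 : B)) * ((y ^ p) ⊗ₜ[C] (1 : B)) := by rw [hy]
          _ = (x ^ p * y ^ p) ⊗ₜ[C] (1 : B) := by
              rw [Algebra.TensorProduct.tmul_mul_tmul, mul_one]
    | add x y hx hy =>
        rw [add_pow_char, map_add, add_pow_char, TensorProduct.add_tmul, hx, hy]
  have hker : ∀ ξ ∈ KaehlerDifferential.ideal C B, ξ ^ p = 0 := by
    intro ξ hξ
    rw [hfrob ξ, RingHom.mem_ker.mp hξ, zero_pow hp.ne', TensorProduct.zero_tmul]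
  -- the kernel is finitely generated
  set Kgen : Ideal (B ⊗[C] B) :=
    Ideal.span ((fun b : B => (1 : B) ⊗ₜ[C] b - b ⊗ₜ[C] (1 : B)) '' (s : Set B)) with hKgen
  have hgen : ∀ b : B, (1 : B) ⊗ₜ[C] b - b ⊗ₜ[C] (1 : B) ∈ Kgen := by
    intro b
    have hb : b ∈ Algebra.adjoin C (s : Set B) := hsC ▸ trivial
    induction hb using Algebra.adjoin_induction with
    | mem x hx => exact Ideal.subset_span ⟨x, hx, rfl⟩
    | algebraMap c =>
        rw [Algebra.algebraMap_eq_smul_one, ← TensorProduct.smul_tmul, sub_self]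
        exact zero_mem _
    | add x y hx hy hpx hpy =>
        have h3 : (1 : B) ⊗ₜ[C] (x + y) - (x + y) ⊗ₜ[C] (1 : B) =
            ((1 : B) ⊗ₜ[C] x - x ⊗ₜ[C] (1 : B)) + ((1 : B) ⊗ₜ[C] y - y ⊗ₜ[C] (1 : B)) := by
          rw [TensorProduct.tmul_add, TensorProduct.add_tmul]; ring
        rw [h3]; exact add_mem hpx hpy
    | mul x y hx hy hpx hpy =>
        have h3 : (1 : B) ⊗ₜ[C] (x * y) - (x * y) ⊗ₜ[C] (1 : B) =
            ((1 : B) ⊗ₜ[C] x) * ((1 : B) ⊗ₜ[C] y - y ⊗ₜ[C] (1 : B)) +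
              ((1 : B) ⊗ₜ[C] x - x ⊗ₜ[C] (1 : B)) * (y ⊗ₜ[C] (1 : B)) := by
          simp only [mul_sub, sub_mul, Algebra.TensorProduct.tmul_mul_tmul, one_mul, mul_one]
          ring
        rw [h3]
        exact add_mem (Ideal.mul_mem_left _ _ hpy) (Ideal.mul_mem_right _ _ hpx)
  have hKeq : KaehlerDifferential.ideal C B = Kgen := by
    refine le_antisymm ?_ (Ideal.span_le.mpr ?_)
    · rw [← KaehlerDifferential.span_range_eq_ideal]
      refine Ideal.span_le.mpr ?_
      rintro _ ⟨b, rfl⟩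
      exact hgen b
    · rintro _ ⟨b, _, rfl⟩
      exact KaehlerDifferential.one_smul_sub_smul_one_mem_ideal C b
  -- the kernel is nilpotent
  have hKnil : IsNilpotent (KaehlerDifferential.ideal C B) := by
    obtain ⟨n, hn⟩ := Ideal.exists_pow_le_of_le_radical_of_fg (J := ⊥)
      (fun x hx => Ideal.mem_radical_iff.mpr ⟨p, by simpa using hker x hx⟩)
      (by rw [hKeq]
          exact ⟨(s.image fun b : B => (1 : B) ⊗ₜ[C] b - b ⊗ₜ[C] (1 : B)),
            by rw [hKgen, Finset.coe_image]⟩)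
    exact ⟨n, le_bot_iff.mp hn⟩
  -- the two inclusions agree
  have hmain : ∀ b : B, b ⊗ₜ[C] (1 : B) = (1 : B) ⊗ₜ[C] b := by
    have hU := Algebra.FormallyUnramified.ext' (R := A)
      ((TensorProduct.lmul' (S := B) C).toRingHom) hKnil
      (Algebra.TensorProduct.includeLeft (S := A))
      (Algebra.TensorProduct.includeRight.restrictScalars A)
      (fun x => by simp [TensorProduct.lmul'_apply_tmul])
    intro b
    exact AlgHom.congr_fun hU b
  -- C = B
  have hCsurj : Function.Surjective (algebraMap C B) :=
    RingHom.surjective_of_tmul_eq_tmul_of_finite.mp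
      ((Algebra.isEpi_iff_forall_one_tmul_eq C B).mpr (fun b => (hmain b).symm))
  -- conclude
  have hCR : ∀ b ∈ C, ∃ y : B, y ^ p = b := by
    have hfreshA : ∀ a : A, ∃ a' : A, a' ^ p = a := fun a =>
      ⟨(frobeniusEquiv A p).symm a, by
        rw [← frobeniusEquiv_def (R := A) p ((frobeniusEquiv A p).symm a)]
        exact (frobeniusEquiv A p).apply_symm_apply a⟩
    intro b hb
    rw [hCdef] at hb
    induction hb using Algebra.adjoin_induction with
    | mem x hx => obtain ⟨y, rfl⟩ := hx; exact ⟨y, rfl⟩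
    | algebraMap a =>
        obtain ⟨a', ha⟩ := hfreshA a
        exact ⟨algebraMap A B a', by rw [← map_pow, ha]⟩
    | add x y hx hy ihx ihy =>
        obtain ⟨u, hu⟩ := ihx; obtain ⟨v, hv⟩ := ihy
        exact ⟨u + v, by rw [add_pow_char, hu, hv]⟩
    | mul x y hx hy ihx ihy =>
        obtain ⟨u, hu⟩ := ihx; obtain ⟨v, hv⟩ := ihy
        exact ⟨u * v, by rw [mul_pow, hu, hv]⟩
  intro b
  obtain ⟨c, hc⟩ := hCsurj b
  obtain ⟨y, hy⟩ := hCR c.1 c.2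
  exact ⟨y, by rw [frobenius_def, hy]; exact hc⟩

/-- Type synonym: `A` viewed as an `A`-algebra via the Frobenius. -/
def FrobTwistBase (p : ℕ) (A : Type u) : Type u := A

/-- Type synonym: `B` viewed as an `A`-algebra via the Frobenius of `A`. -/
def FrobTwist (p : ℕ) (B : Type u) : Type u := B

section TwistInstances

variable (p : ℕ) [Fact p.Prime] (A B : Type u) [CommRing A] [CommRing B]
    [CharP A p] [CharP B p] [Algebra A B]

instance : CommRing (FrobTwistBase p A) := ‹CommRing A›
instance : CommRing (FrobTwist p B) := ‹CommRing B›
instance : CharP (FrobTwist p B) p := ‹CharP B p›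

noncomputable instance : Algebra A (FrobTwistBase p A) := (frobenius A p).toAlgebra

instance : Algebra (FrobTwistBase p A) (FrobTwist p B) := ‹Algebra A B›

noncomputable instance : Algebra A (FrobTwist p B) :=
  ((algebraMap A B).comp (frobenius A p)).toAlgebra

instance : IsScalarTower A (FrobTwistBase p A) (FrobTwist p B) :=
  IsScalarTower.of_algebraMap_eq fun _ => rfl

/-- The Frobenius equivalence as an algebra equivalence onto the twist. -/
noncomputable def frobTwistEquiv [PerfectRing A p] : A ≃ₐ[A] FrobTwistBase p A :=
  { frobeniusEquiv A p with commutes' := fun _ => rfl }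

theorem formallySmooth_self : Algebra.FormallySmooth A A :=
  Algebra.FormallySmooth.of_equiv (MvPolynomial.isEmptyAlgEquiv A PEmpty.{1})

theorem formallyEtale_self : Algebra.FormallyEtale A A :=
  haveI := formallySmooth_self A
  Algebra.FormallyEtale.of_formallyUnramified_and_formallySmooth

noncomputable instance [PerfectRing A p] : Algebra.FormallyEtale A (FrobTwistBase p A) :=
  haveI := formallyEtale_self A
  Algebra.FormallyEtale.of_equiv (frobTwistEquiv p A)

noncomputable instance [PerfectRing A p] : Algebra.FinitePresentation A (FrobTwistBase p A) :=
  Algebra.FinitePresentation.equiv (frobTwistEquiv p A)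

instance [Algebra.Etale A B] : Algebra.FormallyEtale (FrobTwistBase p A) (FrobTwist p B) :=
  inferInstanceAs (Algebra.FormallyEtale A B)

instance [Algebra.Etale A B] : Algebra.FinitePresentation (FrobTwistBase p A) (FrobTwist p B) :=
  inferInstanceAs (Algebra.FinitePresentation A B)

noncomputable instance [Algebra.Etale A B] [PerfectRing A p] :
    Algebra.FormallyEtale A (FrobTwist p B) :=
  Algebra.FormallyEtale.comp A (FrobTwistBase p A) (FrobTwist p B)

noncomputable instance [Algebra.Etale A B] [PerfectRing A p] :
    Algebra.FinitePresentation A (FrobTwist p B) :=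
  Algebra.FinitePresentation.trans A (FrobTwistBase p A) (FrobTwist p B)

end TwistInstances

theorem frob_inj_aux (p : ℕ) [Fact p.Prime] (A B : Type u) [CommRing A] [CommRing B]
    [CharP A p] [CharP B p] [Algebra A B] [Algebra.Etale A B] [PerfectRing A p] :
    Function.Injective (frobenius B p) := by
  have hp : 0 < p := (Fact.out : p.Prime).pos
  -- the Frobenius as an `A`-algebra homomorphism to the twist
  let F : B →ₐ[A] FrobTwist p B :=
    { toRingHom := (frobenius B p : B →+* B)
      commutes' := fun a => by
        show frobenius B p (algebraMap A B a) = algebraMap A B (frobenius A p a)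
        rw [frobenius_def, frobenius_def, map_pow] }
  have hFsurj : Function.Surjective F := frob_surj_aux p A B
  have hFker : ∀ x ∈ RingHom.ker (F : B →+* FrobTwist p B), x ^ p = 0 := fun x hx =>
    RingHom.mem_ker.mp hx
  have hFnil : IsNilpotent (RingHom.ker (F : B →+* FrobTwist p B)) := by
    obtain ⟨n, hn⟩ := Ideal.exists_pow_le_of_le_radical_of_fg (J := ⊥)
      (fun x hx => Ideal.mem_radical_iff.mpr ⟨p, by simpa using hFker x hx⟩)
      (Algebra.FinitePresentation.ker_fG_of_surjective F hFsurj)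
    exact ⟨n, le_bot_iff.mp hn⟩
  -- a section of the Frobenius, by formal smoothness
  let s : FrobTwist p B →ₐ[A] B :=
    Algebra.FormallySmooth.liftOfSurjective (AlgHom.id A (FrobTwist p B)) F hFsurj hFnil
  have hs : ∀ y, F (s y) = y := fun y =>
    Algebra.FormallySmooth.liftOfSurjective_apply (AlgHom.id A (FrobTwist p B)) F hFsurj hFnil y
  -- by formal unramifiedness, `s` is a two-sided inverse
  have huniq : (s.comp F) = AlgHom.id A B :=
    Algebra.FormallyUnramified.ext' (R := A) (F : B →+* FrobTwist p B) hFnil _ _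
      (fun x => by simpa using hs (F x))
  intro x y hxy
  have h1 : s (F x) = s (F y) := congrArg s hxy
  rwa [show s (F x) = x from AlgHom.congr_fun huniq x,
    show s (F y) = y from AlgHom.congr_fun huniq y] at h1

theorem statement2 (p : ℕ) [Fact p.Prime] (A B : Type u) [CommRing A] [CommRing B]
    [CharP A p] [CharP B p] [Algebra A B] [Algebra.Etale A B] [PerfectRing A p] :
    PerfectRing B p :=
  ⟨⟨frob_inj_aux p A B, frob_surj_aux p A B⟩⟩
end

section
/- Let 0 → A → B → C → 0 be a short exact sequence of abelian groups (i.e., A is a subgroup of an abelian group B and C ≅ B/A). If both A and C are isomorphic to a direct sum F ⊕ L with F a finite abelian group and L a free abelian group on a countable set, then B is also isomorphic to a direct sum of a finite abelian group and a free abelian group on a countable set. -/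
/-!
STATEMENT 12: The class 𝒞 of abelian groups isomorphic to `F ⊕ L` with `F` finite and `L`
free abelian on a countable set is closed under extensions: if `0 → A → B → C → 0` is a
short exact sequence of abelian groups (`A` a subgroup of `B` and `C ≅ B/A`) with `A` and
`C` in 𝒞, then `B` is in 𝒞.
-/

universe u

/-- An abelian group `G` belongs to the class 𝒞 if it is isomorphic to a direct sum
`F ⊕ L` with `F` a finite abelian group and `L` a free abelian group on a countable set. -/
def InClassC (G : Type u) [AddCommGroup G] : Prop :=
  ∃ (F : Type u) (_ : AddCommGroup F) (ι : Type u),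
    Finite F ∧ Countable ι ∧ Nonempty (G ≃+ F × FreeAbelianGroup ι)

open Module Submodule

section Helpers

noncomputable instance freeAbelianGroup.intFree (α : Type*) :
    Module.Free ℤ (FreeAbelianGroup α) :=
  Module.Free.of_basis (FreeAbelianGroup.basis α)

/-- Injection of a group into (subgroup × quotient). -/
lemma exists_inj_prod {G : Type*} [AddCommGroup G] (H : AddSubgroup G) :
    ∃ f : G → (↥H × (G ⧸ H)), Function.Injective f := by
  classical
  have hmem : ∀ g : G, g - (Quotient.out (QuotientAddGroup.mk g : G ⧸ H)) ∈ H := by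
    intro g
    have h1 : (QuotientAddGroup.mk (Quotient.out (QuotientAddGroup.mk g : G ⧸ H)) : G ⧸ H)
        = QuotientAddGroup.mk g := Quotient.out_eq _
    have h2 := (QuotientAddGroup.eq (s := H)).mp h1
    have : g - Quotient.out (QuotientAddGroup.mk g : G ⧸ H) = -Quotient.out (QuotientAddGroup.mk g : G ⧸ H) + g := by abel
    rw [this]; exact h2
  refine ⟨fun g => (⟨g - Quotient.out (QuotientAddGroup.mk g : G ⧸ H), hmem g⟩,
    QuotientAddGroup.mk g), ?_⟩
  intro x y hxy
  have h2 : (QuotientAddGroup.mk x : G ⧸ H) = QuotientAddGroup.mk y := congrArg Prod.snd hxy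
  have h1 := congrArg (fun p => (p.1 : G)) hxy
  simp only at h1
  rw [h2] at h1
  exact sub_left_injective h1

lemma finite_of_addSubgroup {G : Type*} [AddCommGroup G] (H : AddSubgroup G)
    [Finite H] [Finite (G ⧸ H)] : Finite G := by
  obtain ⟨f, hf⟩ := exists_inj_prod H
  exact Finite.of_injective f hf

lemma countable_of_addSubgroup {G : Type*} [AddCommGroup G] (H : AddSubgroup G)
    [Countable H] [Countable (G ⧸ H)] : Countable G := by
  obtain ⟨f, hf⟩ := exists_inj_prod H
  exact hf.countable

lemma finite_of_submodule {M : Type*} [AddCommGroup M] (S : Submodule ℤ M)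
    [Finite S] [Finite (M ⧸ S)] : Finite M := by
  haveI : Finite ↥S.toAddSubgroup := ‹Finite ↥S›
  haveI : Finite (M ⧸ S.toAddSubgroup) := ‹Finite (M ⧸ S)›
  exact finite_of_addSubgroup S.toAddSubgroup

end Helpers

section Helpers2

lemma inClassC_congr {G H : Type u} [AddCommGroup G] [AddCommGroup H]
    (e : G ≃+ H) (h : InClassC H) : InClassC G := by
  obtain ⟨F, instF, ι, hF, hι, ⟨eH⟩⟩ := h
  exact ⟨F, instF, ι, hF, hι, ⟨e.trans eH⟩⟩

lemma countable_of_inClassC {G : Type u} [AddCommGroup G] (h : InClassC G) :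
    Countable G := by
  obtain ⟨F, instF, ι, hF, hι, ⟨e⟩⟩ := h
  haveI : Countable F := Finite.to_countable
  haveI : Countable (FreeAbelianGroup ι) :=
    (FreeAbelianGroup.equivFinsupp ι).toEquiv.injective.countable
  exact e.toEquiv.injective.countable

/-- A countable free ℤ-module is `FreeAbelianGroup ι` for countable `ι`. -/
lemma equiv_freeAbelianGroup (M : Type u) [AddCommGroup M] [Countable M]
    (h : Module.Free ℤ M) :
    ∃ ι : Type u, Countable ι ∧ Nonempty (M ≃+ FreeAbelianGroup ι) := by
  haveI := h
  let ι := Module.Free.ChooseBasisIndex ℤ M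
  let b : Basis ι ℤ M := Module.Free.chooseBasis ℤ M
  haveI : Countable ι := b.injective.countable
  exact ⟨ι, inferInstance, ⟨b.repr.toAddEquiv.trans (FreeAbelianGroup.equivFinsupp ι).symm⟩⟩

lemma inClassC_of_finite (G : Type u) [AddCommGroup G] [Finite G] : InClassC G := by
  haveI : Unique (FreeAbelianGroup PEmpty.{u+1}) :=
    Equiv.unique (FreeAbelianGroup.equivFinsupp PEmpty.{u+1}).toEquiv
  exact ⟨G, inferInstance, PEmpty.{u+1}, ‹Finite G›, inferInstance,
    ⟨(AddEquiv.prodUnique (M := G) (N := FreeAbelianGroup PEmpty.{u+1})).symm⟩⟩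

/-- Assembly: `G ≃ X × L` with `X ∈ 𝒞` and `L` countable free implies `G ∈ 𝒞`. -/
lemma inClassC_of_prod {G X L : Type u} [AddCommGroup G] [AddCommGroup X] [AddCommGroup L]
    [Countable L] (hX : InClassC X) (hL : Module.Free ℤ L) (e : G ≃+ X × L) :
    InClassC G := by
  obtain ⟨F, instF, ι, hF, hι, ⟨eX⟩⟩ := hX
  obtain ⟨ι', hι', ⟨eL⟩⟩ := equiv_freeAbelianGroup L hL
  refine ⟨F, instF, ι ⊕ ι', hF, inferInstance, ⟨?_⟩⟩
  refine (((e.trans (AddEquiv.prodCongr eX eL)).trans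
    AddEquiv.prodAssoc).trans
    (AddEquiv.prodCongr (AddEquiv.refl F) ?_))
  refine ((AddEquiv.prodCongr (FreeAbelianGroup.equivFinsupp ι)
      (FreeAbelianGroup.equivFinsupp ι')).trans ?_).trans
      (FreeAbelianGroup.equivFinsupp (ι ⊕ ι')).symm
  exact (Finsupp.sumFinsuppAddEquivProdFinsupp).symm

end Helpers2

/-- A submodule with free quotient splits off. -/
lemma split_of_free_quotient {M : Type u} [AddCommGroup M] (S : Submodule ℤ M)
    (h : Module.Free ℤ (M ⧸ S)) : Nonempty (M ≃+ ↥S × (M ⧸ S)) := by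
  haveI := h
  obtain ⟨g, hg⟩ := Module.projective_lifting_property S.mkQ
    (LinearMap.id : (M ⧸ S) →ₗ[ℤ] (M ⧸ S)) S.mkQ_surjective
  have hg' : ∀ q, S.mkQ (g q) = q := fun q => congrArg (fun f => f q) hg
  have hmem : ∀ m : M, m - g (S.mkQ m) ∈ S := by
    intro m
    rw [← Submodule.Quotient.mk_eq_zero, ← S.mkQ_apply, map_sub, hg', sub_self]
  refine ⟨AddEquiv.mk' ⟨fun m => (⟨m - g (S.mkQ m), hmem m⟩, S.mkQ m),
    fun p => (p.1 : M) + g p.2, ?_, ?_⟩ ?_⟩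
  · intro m
    simp
  · rintro ⟨s, q⟩
    have h0 : S.mkQ (s : M) = 0 := (Submodule.Quotient.mk_eq_zero S).mpr s.2
    refine Prod.ext (Subtype.ext ?_) ?_ <;> simp [map_add, h0, hg']
  · intro x y
    refine Prod.ext (Subtype.ext ?_) ?_ <;> simp [map_add] <;> abel

/-- A torsion-free module with a free submodule of finite index is free. -/
lemma free_of_finite_index {M : Type u} [AddCommGroup M] [NoZeroSMulDivisors ℤ M]
    (S : Submodule ℤ M) (hS : Module.Free ℤ S) [Finite (M ⧸ S)] :
    Module.Free ℤ M := by
  classical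
  haveI := hS
  set n : ℤ := (Nat.card (M ⧸ S) : ℤ) with hn_def
  have hn : n ≠ 0 := by
    have : 0 < Nat.card (M ⧸ S) := Nat.card_pos
    rw [hn_def]
    exact Int.natCast_ne_zero.mpr this.ne'
  have hnS : ∀ m : M, n • m ∈ S := by
    intro m
    have h0 : (Nat.card (M ⧸ S)) • (S.mkQ m) = 0 := card_nsmul_eq_zero'
    have : S.mkQ (n • m) = 0 := by
      rw [map_smul, hn_def, natCast_zsmul, h0]
    rwa [← Submodule.Quotient.mk_eq_zero, ← S.mkQ_apply]
  set ι := Module.Free.ChooseBasisIndex ℤ ↥S with hι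
  set b : Basis ι ℤ ↥S := Module.Free.chooseBasis ℤ ↥S with hb
  have hout : ∀ x : M ⧸ S, S.mkQ (Quotient.out x) = x := fun x => Quotient.out_eq' x
  set sEl : (M ⧸ S) → ↥S := fun x => ⟨n • Quotient.out x, hnS _⟩ with hsEl
  haveI : Fintype (M ⧸ S) := Fintype.ofFinite _
  set J : Set ι := ⋃ x : M ⧸ S, ↑(b.repr (sEl x)).support with hJ
  have hJfin : J.Finite := Set.finite_iUnion fun x => (b.repr (sEl x)).support.finite_toSet
  set c : ι → M := fun i => ↑(b i) with hc
  have cLI : LinearIndependent ℤ c := b.linearIndependent.map' S.subtype S.ker_subtype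
  set LJ : Submodule ℤ M := Submodule.span ℤ (c '' J) with hLJ
  set LJ' : Submodule ℤ M := Submodule.span ℤ (c '' Jᶜ) with hLJ'
  -- coercion of elements supported in J
  have hspan : ∀ s : ↥S, ↑(b.repr s).support ⊆ J → (s : M) ∈ LJ := by
    intro s hsupp
    have h1 : s ∈ Submodule.span ℤ (b '' J) := b.mem_span_image.mpr hsupp
    have h2 : (s : M) ∈ Submodule.map S.subtype (Submodule.span ℤ (b '' J)) :=
      Submodule.mem_map_of_mem h1
    rwa [Submodule.map_span, ← Set.image_comp] at h2
  have hSsup : S = LJ ⊔ LJ' := by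
    have h1 : Set.range c = S.subtype '' Set.range b := by
      rw [← Set.range_comp]; rfl
    have h2 : Submodule.span ℤ (Set.range c) = S := by
      rw [h1, ← Submodule.map_span, b.span_eq, Submodule.map_top, Submodule.range_subtype]
    rw [← h2, hLJ, hLJ', ← Submodule.span_union, ← Set.image_union, Set.union_compl_self,
      Set.image_univ]
  set MJ : Submodule ℤ M := LJ.comap (n • (LinearMap.id : M →ₗ[ℤ] M)) with hMJ
  have hMJ_mem : ∀ m : M, m ∈ MJ ↔ n • m ∈ LJ := by
    intro m
    rw [hMJ, Submodule.mem_comap]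
    simp
  have hdisj : Disjoint LJ LJ' :=
    cLI.disjoint_span_image disjoint_compl_right
  have hcompl : IsCompl MJ LJ' := by
    constructor
    · rw [disjoint_def]
      intro m hm hm'
      have h1 : n • m ∈ LJ := (hMJ_mem m).mp hm
      have h2 : n • m ∈ LJ' := LJ'.smul_mem n hm'
      have h0 : n • m = 0 := (Submodule.disjoint_def.mp hdisj) _ h1 h2
      rcases smul_eq_zero.mp h0 with h | h
      · exact absurd h hn
      · exact h
    · rw [codisjoint_iff_le_sup]
      intro m _
      set r : M := Quotient.out (S.mkQ m) with hr
      have hs₀ : m - r ∈ S := by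
        rw [← Submodule.Quotient.mk_eq_zero, ← S.mkQ_apply, map_sub, hr, hout, sub_self]
      have hs₀' : m - r ∈ LJ ⊔ LJ' := (le_of_eq hSsup) hs₀
      obtain ⟨p, hp, q, hq, hpq⟩ := Submodule.mem_sup.mp hs₀'
      have houtJ : n • r ∈ LJ := by
        have := hspan (sEl (S.mkQ m)) (Set.subset_iUnion
          (fun x : M ⧸ S => (↑(b.repr (sEl x)).support : Set ι)) (S.mkQ m))
        exact this
      have hm_eq : m - q = p + r := by
        have h3 : m - r = p + q := hpq.symm
        rw [sub_eq_iff_eq_add] at h3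
        rw [h3]; abel
      refine Submodule.mem_sup.mpr ⟨m - q, ?_, q, hq, by abel⟩
      rw [hMJ_mem, hm_eq, smul_add]
      exact LJ.add_mem (LJ.smul_mem n hp) houtJ
  -- MJ is free
  haveI hLJfin : Module.Finite ℤ ↥LJ := Module.Finite.span_of_finite ℤ (hJfin.image c)
  haveI : Module.Free ℤ ↥LJ := inferInstance
  have φmem : ∀ x : ↥MJ, n • (x : M) ∈ LJ := fun x => (hMJ_mem _).mp x.2
  set φ : ↥MJ →ₗ[ℤ] ↥LJ := LinearMap.codRestrict LJ
    ((n • (LinearMap.id : M →ₗ[ℤ] M)).comp MJ.subtype) (fun x => by simpa using φmem x)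
    with hφ
  have φinj : Function.Injective φ := by
    intro x y hxy
    have h1 : n • (x : M) = n • (y : M) := by
      have := congrArg (fun z : ↥LJ => (z : M)) hxy
      simpa [hφ] using this
    exact Subtype.ext (smul_right_injective M hn h1)
  haveI : IsNoetherian ℤ ↥LJ := isNoetherian_of_isNoetherianRing_of_finite ℤ ↥LJ
  haveI : Module.Finite ℤ ↥(LinearMap.range φ) :=
    Module.Finite.iff_fg.mpr (IsNoetherian.noetherian _)
  haveI : Module.Free ℤ ↥(LinearMap.range φ) := inferInstance
  haveI : Module.Free ℤ ↥MJ :=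
    Module.Free.of_equiv (LinearEquiv.ofInjective φ φinj).symm
  -- LJ' is free
  haveI : Module.Free ℤ ↥LJ' := by
    have hLI' : LinearIndependent ℤ (fun j : ↥(Jᶜ) => c ↑j) :=
      cLI.comp (Subtype.val : ↥(Jᶜ) → ι) Subtype.val_injective
    have himg : c '' Jᶜ = Set.range (fun j : ↥(Jᶜ) => c ↑j) := Set.image_eq_range c Jᶜ
    rw [hLJ', himg]
    exact Module.Free.of_basis (Basis.span hLI')
  exact Module.Free.of_equiv (Submodule.prodEquivOfIsCompl MJ LJ' hcompl)

lemma torsion_map_equiv {M N : Type*} [AddCommGroup M] [AddCommGroup N]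
    (f : M ≃ₗ[ℤ] N) :
    (Submodule.torsion ℤ M).map (f : M →ₗ[ℤ] N) = Submodule.torsion ℤ N := by
  ext x
  simp only [Submodule.mem_map]
  constructor
  · rintro ⟨y, hy, rfl⟩
    obtain ⟨a, ha⟩ := (Submodule.mem_torsion_iff y).mp hy
    refine (Submodule.mem_torsion_iff _).mpr ⟨a, ?_⟩
    rw [Submonoid.smul_def] at ha ⊢
    rw [LinearEquiv.coe_coe, ← map_smul, ha, map_zero]
  · intro hx
    obtain ⟨a, ha⟩ := (Submodule.mem_torsion_iff x).mp hx
    refine ⟨f.symm x, (Submodule.mem_torsion_iff _).mpr ⟨a, ?_⟩, by simp⟩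
    rw [Submonoid.smul_def] at ha ⊢
    rw [← map_smul, ha, map_zero]

lemma torsion_prod_eq_ker_snd (F L : Type u) [AddCommGroup F] [AddCommGroup L] [Finite F]
    [NoZeroSMulDivisors ℤ L] :
    Submodule.torsion ℤ (F × L) = LinearMap.ker (LinearMap.snd ℤ F L) := by
  ext x
  constructor
  · intro hx
    obtain ⟨a, ha⟩ := (Submodule.mem_torsion_iff x).mp hx
    rw [Submonoid.smul_def] at ha
    have h2 : (a : ℤ) • x.2 = 0 := congrArg Prod.snd ha
    have ha0 : (a : ℤ) ≠ 0 := nonZeroDivisors.coe_ne_zero a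
    rcases smul_eq_zero.mp h2 with h | h
    · exact absurd h ha0
    · exact LinearMap.mem_ker.mpr h
  · intro hx
    have hx2 : x.2 = 0 := LinearMap.mem_ker.mp hx
    have hpos : (0 : ℤ) < (Nat.card F : ℤ) := by exact_mod_cast Nat.card_pos
    refine (Submodule.mem_torsion_iff x).mpr
      ⟨⟨(Nat.card F : ℤ), mem_nonZeroDivisors_of_ne_zero hpos.ne'⟩, ?_⟩
    rw [Submonoid.smul_def]
    have h1 : (Nat.card F : ℤ) • x.1 = 0 := by
      rw [natCast_zsmul]; exact card_nsmul_eq_zero'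
    have h2 : (Nat.card F : ℤ) • x.2 = 0 := by rw [hx2, smul_zero]
    exact Prod.ext h1 h2

/-- Key step: countable `M` with `S ∈ 𝒞` of finite index is in `𝒞`. -/
lemma key_lemma (M : Type u) [AddCommGroup M] [Countable M] (S : Submodule ℤ M)
    [Finite (M ⧸ S)] (hS : InClassC ↥S) : InClassC M := by
  obtain ⟨F, instF, ι, hF, hι, ⟨eS⟩⟩ := hS
  haveI : Finite F := hF
  haveI : Countable ι := hι
  -- second components of torsion elements vanish
  have hsnd : ∀ s : ↥S, s ∈ Submodule.torsion ℤ ↥S → (eS s).2 = 0 := by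
    intro s hs
    obtain ⟨a, ha⟩ := (Submodule.mem_torsion_iff s).mp hs
    rw [Submonoid.smul_def] at ha
    have h1 : (a : ℤ) • eS s = 0 := by rw [← map_zsmul, ha, map_zero]
    have h2 : (a : ℤ) • (eS s).2 = 0 := congrArg Prod.snd h1
    rcases smul_eq_zero.mp h2 with h | h
    · exact absurd h (nonZeroDivisors.coe_ne_zero a)
    · exact h
  set T := Submodule.torsion ℤ M with hT
  -- elements of S that are torsion in M are torsion in S
  have htorsS : ∀ x : ↥S, (x : M) ∈ T → x ∈ Submodule.torsion ℤ ↥S := by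
    intro x hx
    obtain ⟨a, ha⟩ := (Submodule.mem_torsion_iff (x : M)).mp hx
    refine (Submodule.mem_torsion_iff x).mpr ⟨a, ?_⟩
    rw [Submonoid.smul_def] at ha ⊢
    exact Subtype.ext (by rw [Submodule.coe_smul, ha]; rfl)
  have htorsS' : ∀ x : ↥S, x ∈ Submodule.torsion ℤ ↥S → (x : M) ∈ T := by
    intro x hx
    obtain ⟨a, ha⟩ := (Submodule.mem_torsion_iff x).mp hx
    refine (Submodule.mem_torsion_iff (x : M)).mpr ⟨a, ?_⟩
    rw [Submonoid.smul_def] at ha ⊢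
    rw [← Submodule.coe_smul, ha, Submodule.coe_zero]
  -- T is finite
  set g : ↥T →ₗ[ℤ] M ⧸ S := S.mkQ.comp T.subtype with hg
  have hgmem : ∀ x : ↥(LinearMap.ker g), (((x : ↥T) : M)) ∈ S := by
    intro x
    have h1 : S.mkQ ((x : ↥T) : M) = 0 := x.2
    rwa [S.mkQ_apply, Submodule.Quotient.mk_eq_zero] at h1
  haveI : Finite ↥(LinearMap.ker g) := by
    refine Finite.of_injective
      (fun x : ↥(LinearMap.ker g) => (eS ⟨((x : ↥T) : M), hgmem x⟩).1) ?_
    intro x y hxy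
    have hx2 : (eS ⟨((x : ↥T) : M), hgmem x⟩).2 = 0 :=
      hsnd _ (htorsS _ (x : ↥T).2)
    have hy2 : (eS ⟨((y : ↥T) : M), hgmem y⟩).2 = 0 :=
      hsnd _ (htorsS _ (y : ↥T).2)
    have heq : eS ⟨((x : ↥T) : M), hgmem x⟩ = eS ⟨((y : ↥T) : M), hgmem y⟩ :=
      Prod.ext hxy (hx2.trans hy2.symm)
    have := eS.injective heq
    have hval : ((x : ↥T) : M) = ((y : ↥T) : M) := congrArg (fun z : ↥S => (z : M)) this
    exact Subtype.ext (Subtype.ext hval)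
  haveI : Finite (↥T ⧸ LinearMap.ker g) := by
    haveI : Finite ↥(LinearMap.range g) := Subtype.finite
    exact Finite.of_equiv _ g.quotKerEquivRange.symm.toEquiv
  haveI finT : Finite ↥T := finite_of_submodule (LinearMap.ker g)
  -- M ⧸ T is torsion-free
  haveI hNZ : NoZeroSMulDivisors ℤ (M ⧸ T) := by
    rw [hT]; haveI := Module.isTorsionFree_int_iff_isAddTorsionFree.mp
      (inferInstance : Module.IsTorsionFree ℤ (M ⧸ torsion ℤ M)); infer_instance
  -- image of S in M ⧸ T
  set S' : Submodule ℤ (M ⧸ T) := S.map T.mkQ with hS'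
  set h : ↥S →ₗ[ℤ] M ⧸ T := T.mkQ.comp S.subtype with hh
  have hrange : LinearMap.range h = S' := by
    rw [hh, LinearMap.range_comp, Submodule.range_subtype, hS']
  have hker : LinearMap.ker h = Submodule.torsion ℤ ↥S := by
    ext x
    have h1 : x ∈ LinearMap.ker h ↔ (x : M) ∈ T := by
      rw [LinearMap.mem_ker, hh, LinearMap.comp_apply, Submodule.coe_subtype,
        T.mkQ_apply, Submodule.Quotient.mk_eq_zero]
    rw [h1]
    exact ⟨htorsS x, htorsS' x⟩
  -- S ⧸ torsion S is free
  have hfreeStors : Module.Free ℤ (↥S ⧸ Submodule.torsion ℤ ↥S) := by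
    set eL : ↥S ≃ₗ[ℤ] F × FreeAbelianGroup ι := eS.toIntLinearEquiv with heL
    have e1 : (↥S ⧸ Submodule.torsion ℤ ↥S) ≃ₗ[ℤ]
        ((F × FreeAbelianGroup ι) ⧸ Submodule.torsion ℤ (F × FreeAbelianGroup ι)) :=
      Submodule.Quotient.equiv _ _ eL (torsion_map_equiv eL)
    have e2 : ((F × FreeAbelianGroup ι) ⧸ Submodule.torsion ℤ (F × FreeAbelianGroup ι)) ≃ₗ[ℤ]
        FreeAbelianGroup ι := by
      haveI := Module.isTorsionFree_int_iff_isAddTorsionFree.mp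
        (inferInstance : Module.IsTorsionFree ℤ (FreeAbelianGroup ι))
      refine (Submodule.quotEquivOfEq _ _ (torsion_prod_eq_ker_snd F (FreeAbelianGroup ι))).trans
        ((LinearMap.snd ℤ F (FreeAbelianGroup ι)).quotKerEquivOfSurjective ?_)
      exact fun l => ⟨(0, l), rfl⟩
    exact Module.Free.of_equiv (e1.trans e2).symm
  haveI hfreeS' : Module.Free ℤ ↥S' := by
    have q0 : (↥S ⧸ Submodule.torsion ℤ ↥S) ≃ₗ[ℤ] (↥S ⧸ LinearMap.ker h) :=
      Submodule.quotEquivOfEq _ _ hker.symm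
    exact Module.Free.of_equiv (q0.trans (h.quotKerEquivRange.trans
      (LinearEquiv.ofEq _ _ hrange)))
  -- (M ⧸ T) ⧸ S' is finite
  haveI : Finite ((M ⧸ T) ⧸ S') := by
    have hle : S ≤ LinearMap.ker (S'.mkQ.comp T.mkQ) := by
      intro s hs
      rw [LinearMap.mem_ker, LinearMap.comp_apply, S'.mkQ_apply,
        Submodule.Quotient.mk_eq_zero]
      exact Submodule.mem_map_of_mem hs
    have hsurj : Function.Surjective (Submodule.liftQ S _ hle) := by
      intro z
      obtain ⟨w, rfl⟩ := S'.mkQ_surjective z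
      obtain ⟨m, rfl⟩ := T.mkQ_surjective w
      exact ⟨S.mkQ m, by rw [S.mkQ_apply, Submodule.liftQ_apply, LinearMap.comp_apply]⟩
    exact Finite.of_surjective _ hsurj
  -- M ⧸ T is free
  have hfreeMT : Module.Free ℤ (M ⧸ T) := free_of_finite_index S' hfreeS'
  obtain ⟨e3⟩ := split_of_free_quotient T hfreeMT
  haveI : Countable (M ⧸ T) := Quotient.countable
  exact inClassC_of_prod (inClassC_of_finite ↥T) hfreeMT e3

theorem statement12 (B : Type u) [AddCommGroup B] (A : AddSubgroup B)
    (C : Type u) [AddCommGroup C] (hC : Nonempty (C ≃+ B ⧸ A))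
    (hA : InClassC A) (hquot : InClassC C) :
    InClassC B := by
  obtain ⟨eC⟩ := hC
  obtain ⟨F₁, instF₁, ι₁, hF₁, hι₁, ⟨e₁⟩⟩ := hquot
  haveI : Finite F₁ := hF₁
  haveI : Countable ι₁ := hι₁
  have e2 : (B ⧸ A) ≃+ F₁ × FreeAbelianGroup ι₁ := eC.symm.trans e₁
  haveI : Countable (FreeAbelianGroup ι₁) :=
    (FreeAbelianGroup.equivFinsupp ι₁).toEquiv.injective.countable
  haveI : Countable ↥A := countable_of_inClassC hA
  haveI : Countable (B ⧸ A) := e2.toEquiv.injective.countable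
  haveI : Countable B := countable_of_addSubgroup A
  set πa : B →+ FreeAbelianGroup ι₁ :=
    (AddMonoidHom.snd F₁ (FreeAbelianGroup ι₁)).comp
      (e2.toAddMonoidHom.comp (QuotientAddGroup.mk' A)) with hπa
  set π : B →ₗ[ℤ] FreeAbelianGroup ι₁ := πa.toIntLinearMap with hπ
  set K := LinearMap.ker π with hK
  have hAK : ∀ a : B, a ∈ A → a ∈ K := by
    intro a ha
    have h0 : ((a : B ⧸ A) : B ⧸ A) = 0 := (QuotientAddGroup.eq_zero_iff a).mpr ha
    have : πa a = 0 := by rw [hπa]; simp [QuotientAddGroup.mk'_apply, h0]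
    exact LinearMap.mem_ker.mpr this
  set SA : Submodule ℤ ↥K := Submodule.comap K.subtype (AddSubgroup.toIntSubmodule A)
    with hSA
  have hmemSA : ∀ x : ↥K, x ∈ SA ↔ (x : B) ∈ A := by
    intro x
    rw [hSA, Submodule.mem_comap]
    rfl
  have eSA : ↥SA ≃+ ↥A :=
    { toFun := fun x => ⟨↑↑x, (hmemSA _).mp x.2⟩
      invFun := fun a => ⟨⟨↑a, hAK a a.2⟩, (hmemSA _).mpr a.2⟩
      left_inv := fun x => by ext; rfl
      right_inv := fun a => by ext; rfl
      map_add' := fun x y => by ext; rfl }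
  have hInSA : InClassC ↥SA := inClassC_congr eSA hA
  set gl : ↥K →ₗ[ℤ] F₁ := ((AddMonoidHom.fst F₁ (FreeAbelianGroup ι₁)).comp
      (e2.toAddMonoidHom.comp ((QuotientAddGroup.mk' A).comp
        K.subtype.toAddMonoidHom))).toIntLinearMap with hgl
  have hle : SA ≤ LinearMap.ker gl := by
    intro x hx
    have h0 : (((x : B) : B ⧸ A) : B ⧸ A) = 0 :=
      (QuotientAddGroup.eq_zero_iff _).mpr ((hmemSA _).mp hx)
    have : gl x = 0 := by rw [hgl]; simp [QuotientAddGroup.mk'_apply, h0]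
    exact LinearMap.mem_ker.mpr this
  have hker_le : LinearMap.ker gl ≤ SA := by
    intro x hx
    have h1 : (e2 (((x : B) : B ⧸ A))).1 = 0 := hx
    have h2 : (e2 (((x : B) : B ⧸ A))).2 = 0 := x.2
    have h3 : e2 (((x : B) : B ⧸ A)) = 0 := Prod.ext h1 h2
    have h4 : (((x : B) : B ⧸ A)) = 0 := by
      have := congrArg e2.symm h3
      simpa using this
    exact (hmemSA _).mpr ((QuotientAddGroup.eq_zero_iff _).mp h4)
  haveI : Finite (↥K ⧸ SA) := by
    have hinj : Function.Injective (Submodule.liftQ SA gl hle) := by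
      rw [← LinearMap.ker_eq_bot, Submodule.ker_liftQ_eq_bot]
      exact hker_le
    exact Finite.of_injective _ hinj
  have hK_class : InClassC ↥K := key_lemma ↥K SA hInSA
  have hπsurj : Function.Surjective π := by
    intro z
    obtain ⟨w, hw⟩ := QuotientAddGroup.mk'_surjective A (e2.symm (0, z))
    refine ⟨w, ?_⟩
    show πa w = z
    rw [hπa]
    simp [QuotientAddGroup.mk'_apply] at hw ⊢
    rw [hw]
    simp
  have hfreeBK : Module.Free ℤ (B ⧸ K) :=
    Module.Free.of_equiv (π.quotKerEquivOfSurjective hπsurj).symm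
  obtain ⟨e3⟩ := split_of_free_quotient K hfreeBK
  haveI : Countable (B ⧸ K) := Quotient.countable
  exact inClassC_of_prod hK_class hfreeBK e3
end

section
/- An abelian group G is isomorphic to a direct sum F ⊕ L, with F a finite abelian group and L a free abelian group on a countable set, if and only if there exists a surjective group homomorphism from a free abelian group on a countable set onto G whose kernel is a finitely generated group. -/
/-!
STATEMENT 13: An abelian group `G` is isomorphic to `F ⊕ L` (`F` finite, `L` free abelian
on a countable set) if and only if there is a surjective homomorphism onto `G` from a free
abelian group on a countable set whose kernel is finitely generated.
-/

universe u

open DirectSum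

section Aux

variable {M M₁ M₂ N : Type*} [AddCommGroup M] [AddCommGroup M₁] [AddCommGroup M₂]
  [AddCommGroup N] [Module ℤ M] [Module ℤ N]

theorem mem_map_lequiv (E : M ≃ₗ[ℤ] N) (P : Submodule ℤ M) (x : N) :
    x ∈ P.map E.toLinearMap ↔ E.symm x ∈ P := by
  constructor
  · rintro ⟨y, hy, rfl⟩; simpa
  · intro h; exact ⟨E.symm x, h, by simp⟩

/-- Quotient of a product by `K ×ˢ ⊥` is (quotient) × (second factor). -/
noncomputable def quotProdBot (K : Submodule ℤ M₁) :
    ((M₁ × M₂) ⧸ (K.prod (⊥ : Submodule ℤ M₂))) ≃ₗ[ℤ] (M₁ ⧸ K) × M₂ := by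
  let q : (M₁ × M₂) →ₗ[ℤ] (M₁ ⧸ K) × M₂ := K.mkQ.prodMap LinearMap.id
  have hker : LinearMap.ker q = K.prod ⊥ := by
    rw [LinearMap.ker_prodMap, Submodule.ker_mkQ, LinearMap.ker_id]
  have hsurj : Function.Surjective q :=
    (K.mkQ_surjective).prodMap Function.surjective_id
  exact (Submodule.quotEquivOfEq _ _ hker.symm).trans (q.quotKerEquivOfSurjective hsurj)

end Aux

theorem statement13 (G : Type u) [AddCommGroup G] :
    InClassC G ↔
      ∃ (ι : Type u) (f : FreeAbelianGroup ι →+ G),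
        Countable ι ∧ Function.Surjective f ∧ f.ker.FG := by
  classical
  constructor
  · rintro ⟨F, _, ι₀, hF, hι₀, ⟨e⟩⟩
    -- Use the free abelian group on `F ⊕ ι₀`.
    let π : FreeAbelianGroup F →+ F := FreeAbelianGroup.lift id
    let d : FreeAbelianGroup (F ⊕ ι₀) ≃+ FreeAbelianGroup F × FreeAbelianGroup ι₀ :=
      ((FreeAbelianGroup.equivFinsupp (F ⊕ ι₀)).trans
        Finsupp.sumFinsuppAddEquivProdFinsupp).trans
        (AddEquiv.prodCongr (FreeAbelianGroup.equivFinsupp F).symm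
          (FreeAbelianGroup.equivFinsupp ι₀).symm)
    let h : FreeAbelianGroup F × FreeAbelianGroup ι₀ →+ F × FreeAbelianGroup ι₀ :=
      π.prodMap (AddMonoidHom.id _)
    refine ⟨F ⊕ ι₀, e.symm.toAddMonoidHom.comp (h.comp d.toAddMonoidHom), inferInstance,
      ?_, ?_⟩
    · have hπ : Function.Surjective π := fun a =>
        ⟨FreeAbelianGroup.of a, FreeAbelianGroup.lift_apply_of _ _⟩
      have hh : Function.Surjective h := hπ.prodMap Function.surjective_id
      exact e.symm.surjective.comp (hh.comp d.surjective)
    · -- the kernel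
      rw [← AddSubgroup.toIntSubmodule_toAddSubgroup
          ((e.symm.toAddMonoidHom.comp (h.comp d.toAddMonoidHom)).ker),
        ← Submodule.fg_iff_addSubgroup_fg]
      have hker : AddSubgroup.toIntSubmodule
            ((e.symm.toAddMonoidHom.comp (h.comp d.toAddMonoidHom)).ker) =
          Submodule.map d.symm.toIntLinearEquiv.toLinearMap
            ((AddSubgroup.toIntSubmodule π.ker).prod (⊥ : Submodule ℤ (FreeAbelianGroup ι₀))) := by
        ext x
        rw [mem_map_lequiv, Submodule.mem_prod, Submodule.mem_bot]
        show e.symm (h (d x)) = 0 ↔ π (d x).1 = 0 ∧ (d x).2 = 0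
        rw [EmbeddingLike.map_eq_zero_iff, Prod.ext_iff]
        exact Iff.rfl
      rw [hker]
      haveI : IsNoetherian ℤ (FreeAbelianGroup F) :=
        isNoetherian_of_linearEquiv (FreeAbelianGroup.equivFinsupp F).symm.toIntLinearEquiv
      exact Submodule.FG.map _
        (Submodule.FG.prod (IsNoetherian.noetherian _) Submodule.fg_bot)
  · rintro ⟨ι, f, hι, hsurj, hker⟩
    -- Move to the `ι →₀ ℤ` model.
    let c : FreeAbelianGroup ι ≃+ (ι →₀ ℤ) := FreeAbelianGroup.equivFinsupp ι
    let g : (ι →₀ ℤ) →+ G := f.comp c.symm.toAddMonoidHom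
    have hg : Function.Surjective g := hsurj.comp c.symm.surjective
    -- the kernel of `g` as a submodule
    let K : Submodule ℤ (ι →₀ ℤ) := LinearMap.ker g.toIntLinearMap
    have hKfg : K.FG := by
      have h1 : K = Submodule.map c.toIntLinearEquiv.toLinearMap
          (AddSubgroup.toIntSubmodule f.ker) := by
        ext x
        rw [mem_map_lequiv]
        exact Iff.rfl
      rw [h1]
      refine Submodule.FG.map _ ?_
      rwa [Submodule.fg_iff_addSubgroup_fg, AddSubgroup.toIntSubmodule_toAddSubgroup]
    obtain ⟨T, hT⟩ := hKfg
    -- the finite set of coordinates touched by the kernel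
    let s : Finset ι := T.sup Finsupp.support
    have hKs : K ≤ Finsupp.supported ℤ ℤ (↑s : Set ι) := by
      rw [← hT, Submodule.span_le]
      intro t ht
      rw [SetLike.mem_coe, Finsupp.mem_supported]
      exact_mod_cast Finset.le_sup (f := Finsupp.support) ht
    let p : ι → Prop := fun x => x ∈ s
    let E : (ι →₀ ℤ) ≃ₗ[ℤ] ({x // p x} →₀ ℤ) × ({x // ¬ p x} →₀ ℤ) :=
      (Finsupp.domLCongr (Equiv.sumCompl p).symm).trans (Finsupp.sumFinsuppLEquivProdFinsupp ℤ)
    have hsnd : ∀ x ∈ K, (E x).2 = 0 := by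
      intro x hx
      ext b
      have h2 : (E x).2 b = x b.1 := by
        simp [E, Finsupp.snd_sumFinsuppLEquivProdFinsupp]
      rw [h2, Finsupp.coe_zero, Pi.zero_apply]
      have hb : b.1 ∉ s := b.2
      by_contra hxb
      exact hb (hKs hx (Finsupp.mem_support_iff.mpr hxb))
    let K₂ := K.map E.toLinearMap
    let K₁ := K₂.map (LinearMap.fst ℤ _ _)
    have hK₂ : K₂ = K₁.prod ⊥ := by
      ext ⟨a, b⟩
      constructor
      · intro hab
        refine ⟨⟨(a, b), hab, rfl⟩, ?_⟩
        obtain ⟨x, hx, hEx⟩ := hab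
        have hEx' : E x = (a, b) := hEx
        have h3 := hsnd x hx
        rw [hEx'] at h3
        simpa using h3
      · rintro ⟨ha, hb⟩
        obtain ⟨z, hz, hz1⟩ := ha
        have hz2 : z.2 = 0 := by
          obtain ⟨x, hx, hEx⟩ := hz
          have hEx' : E x = z := hEx
          have h4 := hsnd x hx; rw [hEx'] at h4; exact h4
        have hb0 : b = 0 := by simpa using hb
        have h5 : (a, b) = z := by
          rw [Prod.ext_iff]; exact ⟨hz1.symm, by rw [hb0, hz2]⟩
        rw [h5]; exact hz
    -- Now assemble the equivalences.
    have e1 : ((ι →₀ ℤ) ⧸ K) ≃ₗ[ℤ] G := g.toIntLinearMap.quotKerEquivOfSurjective hg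
    have e2 : ((ι →₀ ℤ) ⧸ K) ≃ₗ[ℤ] (_ ⧸ K₂) := Submodule.Quotient.equiv K K₂ E rfl
    have e3 := Submodule.quotEquivOfEq _ _ hK₂
    have e4 := (quotProdBot (M₂ := {x // ¬ p x} →₀ ℤ) K₁)
    -- `({x // p x} →₀ ℤ) ⧸ K₁` is a finitely generated abelian group
    haveI : Finite {x // p x} := inferInstanceAs (Finite {x // x ∈ s})
    haveI : Module.Finite ℤ ({x // p x} →₀ ℤ) := inferInstance
    haveI : Module.Finite ℤ (({x // p x} →₀ ℤ) ⧸ K₁) := Module.Finite.quotient ℤ K₁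
    haveI : AddGroup.FG (({x // p x} →₀ ℤ) ⧸ K₁) := Module.Finite.iff_addGroup_fg.mp ‹_›
    obtain ⟨n, ι', fι', pr, hpr, ex, ⟨φ⟩⟩ :=
      AddCommGroup.equiv_free_prod_directSum_zmod (({x // p x} →₀ ℤ) ⧸ K₁)
    -- finiteness of the torsion part
    haveI : ∀ i : ι', NeZero (pr i ^ ex i) := fun i =>
      ⟨pow_ne_zero _ (hpr i).ne_zero⟩
    haveI hD : Finite (⨁ i : ι', ZMod (pr i ^ ex i)) :=
      Finite.of_equiv _ DFinsupp.equivFunOnFintype.symm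
    -- final free index type
    refine ⟨ULift.{u} (⨁ i : ι', ZMod (pr i ^ ex i)), inferInstance,
      ULift.{u} (Fin n) ⊕ {x // ¬ p x}, inferInstance, inferInstance, ⟨?_⟩⟩
    -- build the equivalence
    have eFree : FreeAbelianGroup (ULift.{u} (Fin n) ⊕ {x // ¬ p x}) ≃+
        (Fin n →₀ ℤ) × ({x // ¬ p x} →₀ ℤ) :=
      ((FreeAbelianGroup.equivFinsupp _).trans Finsupp.sumFinsuppAddEquivProdFinsupp).trans
        (AddEquiv.prodCongr (Finsupp.domCongr Equiv.ulift) (AddEquiv.refl _))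
    exact ((((e1.symm.toAddEquiv.trans e2.toAddEquiv).trans e3.toAddEquiv).trans
      e4.toAddEquiv).trans (AddEquiv.prodCongr φ (AddEquiv.refl _))).trans
      ((AddEquiv.prodCongr (AddEquiv.prodComm) (AddEquiv.refl _)).trans
        (AddEquiv.prodAssoc.trans (AddEquiv.prodCongr AddEquiv.ulift.symm eFree.symm)))
end
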